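/- With U_Σ = Σ^{1/2} U Σ^{-1/2} for orthogonal U and Σ ≻ 0, and A_ℓ = a_ℓ Σ^{-1}, the product map satisfies G(U_Σ X₀, A) = U_Σ G(X₀, A), where G(X, A) = X ∏_{ℓ=0}^{k}(I + M X^⊤ A_ℓ X) and M = diag(I_n, 0). -/

import Mathlib

open Matrix

/-- The product of attention layers:
`G(X, A) = X ∏_{ℓ=0}^{k} (I + M Xᵀ A_ℓ X)` (ordered product). -/
noncomputable def Gprod (d n k : ℕ) (M : Matrix (Fin (n + 1)) (Fin (n + 1)) ℝ)
    (A : ℕ → Matrix (Fin d) (Fin d) ℝ) (X : Matrix (Fin d) (Fin (n + 1)) ℝ) :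
    Matrix (Fin d) (Fin (n + 1)) ℝ :=
  X * ((List.range (k + 1)).map fun ℓ => 1 + M * Xᵀ * A ℓ * X).prod

/-- Equivariance of `G` under `U_Σ = Σ^{1/2} U Σ^{-1/2}` when every `A_ℓ` is a scalar
multiple of `Σ⁻¹`:  `G(U_Σ X₀, A) = U_Σ G(X₀, A)`. -/
theorem stmt13 (d n k : ℕ) (S Ssqrt U : Matrix (Fin d) (Fin d) ℝ)
    (hS : S.PosDef) (hsqrt : Ssqrt.PosDef) (hsq : Ssqrt * Ssqrt = S)
    (hU : Uᵀ * U = 1)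
    (A : ℕ → Matrix (Fin d) (Fin d) ℝ) (a : ℕ → ℝ)
    (hA : ∀ ℓ, A ℓ = a ℓ • S⁻¹)
    (M : Matrix (Fin (n + 1)) (Fin (n + 1)) ℝ)
    (hM : M = Matrix.diagonal fun i => if i = Fin.last n then (0 : ℝ) else 1)
    (X₀ : Matrix (Fin d) (Fin (n + 1)) ℝ) :
    Gprod d n k M A ((Ssqrt * U * Ssqrt⁻¹) * X₀)
      = (Ssqrt * U * Ssqrt⁻¹) * Gprod d n k M A X₀ := by
  set W := Ssqrt * U * Ssqrt⁻¹ with hW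
  have hdet : IsUnit Ssqrt.det := by
    simpa using hsqrt.det_pos.ne'
  have hinv : Ssqrt⁻¹ * Ssqrt = 1 := Matrix.nonsing_inv_mul _ hdet
  have hinv' : Ssqrt * Ssqrt⁻¹ = 1 := Matrix.mul_nonsing_inv _ hdet
  have hT : Ssqrtᵀ = Ssqrt := by
    have := hsqrt.isHermitian.eq
    simpa [Matrix.conjTranspose, Matrix.transpose, Matrix.map, starRingEnd_apply, star_trivial] using this
  have hSinv : S⁻¹ = Ssqrt⁻¹ * Ssqrt⁻¹ := by
    rw [← hsq, Matrix.mul_inv_rev]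
  have hWT : Wᵀ = Ssqrt⁻¹ * Uᵀ * Ssqrt := by
    simp [hW, Matrix.transpose_mul, Matrix.transpose_nonsing_inv, hT, Matrix.mul_assoc]
  have key : ∀ ℓ, (W * X₀)ᵀ * A ℓ * (W * X₀) = X₀ᵀ * A ℓ * X₀ := by
    intro ℓ
    have : Wᵀ * A ℓ * W = A ℓ := by
      rw [hA ℓ, hSinv, hWT]
      rw [Matrix.mul_smul, Matrix.smul_mul]
      congr 1
      calc Ssqrt⁻¹ * Uᵀ * Ssqrt * (Ssqrt⁻¹ * Ssqrt⁻¹) * (Ssqrt * U * Ssqrt⁻¹)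
          = Ssqrt⁻¹ * Uᵀ * (Ssqrt * Ssqrt⁻¹) * Ssqrt⁻¹ * Ssqrt * (U * Ssqrt⁻¹) := by
            simp only [Matrix.mul_assoc]
        _ = Ssqrt⁻¹ * (Uᵀ * U) * Ssqrt⁻¹ := by
            rw [hinv']
            simp only [Matrix.mul_one, Matrix.mul_assoc, hinv, Matrix.one_mul]
        _ = Ssqrt⁻¹ * Ssqrt⁻¹ := by rw [hU]; simp
    calc (W * X₀)ᵀ * A ℓ * (W * X₀) = X₀ᵀ * (Wᵀ * A ℓ * W) * X₀ := by
          simp [Matrix.transpose_mul, Matrix.mul_assoc]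
      _ = X₀ᵀ * A ℓ * X₀ := by rw [this, Matrix.mul_assoc]
  unfold Gprod
  have hfac : ((List.range (k + 1)).map fun ℓ => 1 + M * (W * X₀)ᵀ * A ℓ * (W * X₀)).prod
      = ((List.range (k + 1)).map fun ℓ => 1 + M * X₀ᵀ * A ℓ * X₀).prod := by
    congr 1
    apply List.map_congr_left
    intro ℓ _
    rw [Matrix.mul_assoc M, Matrix.mul_assoc M, key ℓ, ← Matrix.mul_assoc M, ← Matrix.mul_assoc M]
  rw [hfac, Matrix.mul_assoc]
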